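/- Let k be a field and let R := k[a,b,c]/(ac − b²). Let M := R² with standard basis e_1, e_2, and let B be the symmetric R-bilinear form on M with Gram matrix [[a, b], [b, c]], i.e. B(e_1,e_1)=a, B(e_1,e_2)=B(e_2,e_1)=b, B(e_2,e_2)=c. Let B⊗B be the bilinear form on M ⊗_R M determined by (B⊗B)(u⊗v, u'⊗v') = B(u,u')·B(v,v'). Then the element v := e_1 ⊗ e_2 − e_2 ⊗ e_1 of M ⊗_R M lies in the radical of B⊗B, yet its image in (M/rad(B)) ⊗_R (M/rad(B)) is nonzero; consequently the canonical map (M/rad(B)) ⊗_R (M/rad(B)) → (M ⊗_R M)/rad(B⊗B) is not injective. -/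

import Mathlib

open TensorProduct

set_option synthInstance.maxHeartbeats 1000000
set_option maxHeartbeats 2000000

/-- The ring `R = k[a,b,c]/(ac − b²)`. -/
abbrev ConeRing (k : Type*) [Field k] : Type _ :=
  MvPolynomial (Fin 3) k ⧸
    Ideal.span {(MvPolynomial.X 0 * MvPolynomial.X 2 - MvPolynomial.X 1 ^ 2 :
      MvPolynomial (Fin 3) k)}

/-- The images of the generators `a`, `b`, `c` in `k[a,b,c]/(ac − b²)`. -/
noncomputable def coneGen (k : Type*) [Field k] (i : Fin 3) : ConeRing k :=
  Ideal.Quotient.mk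
    (Ideal.span {(MvPolynomial.X 0 * MvPolynomial.X 2 - MvPolynomial.X 1 ^ 2 :
      MvPolynomial (Fin 3) k)}) (MvPolynomial.X i)

section Aux
variable (k : Type*) [Field k]

lemma cone_rel : coneGen k 0 * coneGen k 2 = coneGen k 1 ^ 2 := by
  unfold coneGen
  rw [← map_mul, ← map_pow, Ideal.Quotient.eq]
  exact Ideal.subset_span rfl

abbrev ConeTgt := TrivSqZeroExt k (k × k)

noncomputable def conePsi : ConeRing k →+* ConeTgt k :=
  Ideal.Quotient.lift _
    ((MvPolynomial.aeval
      (![TrivSqZeroExt.inr (1, 0), TrivSqZeroExt.inr (0, 1), 0] :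
        Fin 3 → ConeTgt k)).toRingHom)
    (by
      intro x hx
      rw [Ideal.mem_span_singleton] at hx
      obtain ⟨q, rfl⟩ := hx
      simp [pow_two, TrivSqZeroExt.inr_mul_inr])

@[simp] lemma conePsi_a : conePsi k (coneGen k 0) = TrivSqZeroExt.inr (1, 0) := by
  simp [conePsi, coneGen]

@[simp] lemma conePsi_b : conePsi k (coneGen k 1) = TrivSqZeroExt.inr (0, 1) := by
  simp [conePsi, coneGen]

noncomputable def coneK : Ideal (ConeRing k) :=
  RingHom.ker ((TrivSqZeroExt.fstHom k k (k × k)).toRingHom.comp (conePsi k))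

lemma one_not_mem_coneK : (1 : ConeRing k) ∉ coneK k := by
  simp [coneK, RingHom.mem_ker]

lemma mem_coneK (x y : ConeRing k)
    (h : x * coneGen k 0 + y * coneGen k 1 = 0) :
    x ∈ coneK k ∧ y ∈ coneK k := by
  have h2 := congrArg (conePsi k) h
  simp only [map_add, map_mul, conePsi_a, conePsi_b, map_zero] at h2
  have h3 := congrArg TrivSqZeroExt.snd h2
  simp only [TrivSqZeroExt.snd_add, TrivSqZeroExt.snd_mul, TrivSqZeroExt.snd_inr,
    TrivSqZeroExt.fst_inr, TrivSqZeroExt.snd_zero, MulOpposite.op_zero, zero_smul,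
    add_zero, smul_zero] at h3
  rw [Prod.ext_iff] at h3
  simp only [Prod.fst_add, Prod.snd_add, Prod.smul_mk, smul_eq_mul, mul_one, mul_zero,
    Prod.mk_add_mk, Prod.fst_zero, Prod.snd_zero, add_zero, zero_add] at h3
  constructor <;>
    simp only [coneK, RingHom.mem_ker, RingHom.comp_apply, AlgHom.toRingHom_eq_coe,
      RingHom.coe_coe, TrivSqZeroExt.fstHom_apply]
  · exact h3.1
  · exact h3.2

end Aux

set_option maxHeartbeats 1000000000

/-- Let `R = k[a,b,c]/(ac − b²)`, `M = R²`, and `B` the symmetric bilinear form on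
`M` with Gram matrix `[[a,b],[b,c]]`.  Let `B⊗B` be the induced form on `M ⊗_R M`.
Then `v = e₁ ⊗ e₂ − e₂ ⊗ e₁` lies in the radical of `B⊗B`, yet its image in
`(M/rad B) ⊗_R (M/rad B)` is nonzero; consequently the canonical map
`(M/rad B) ⊗_R (M/rad B) → (M ⊗_R M)/rad(B⊗B)` is not injective. -/
theorem cone_ring_tensor_radical_not_injective
    (k : Type*) [Field k]
    (B : (Fin 2 → ConeRing k) →ₗ[ConeRing k]
          (Fin 2 → ConeRing k) →ₗ[ConeRing k] ConeRing k)
    (hB11 : B ![1, 0] ![1, 0] = coneGen k 0)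
    (hB12 : B ![1, 0] ![0, 1] = coneGen k 1)
    (hB21 : B ![0, 1] ![1, 0] = coneGen k 1)
    (hB22 : B ![0, 1] ![0, 1] = coneGen k 2)
    (B₂ : ((Fin 2 → ConeRing k) ⊗[ConeRing k] (Fin 2 → ConeRing k))
            →ₗ[ConeRing k]
          ((Fin 2 → ConeRing k) ⊗[ConeRing k] (Fin 2 → ConeRing k))
            →ₗ[ConeRing k] ConeRing k)
    (hB₂ : ∀ u v u' v', B₂ (u ⊗ₜ v) (u' ⊗ₜ v') = B u u' * B v v') :
    ((![1, 0] ⊗ₜ ![0, 1] - ![0, 1] ⊗ₜ ![1, 0] :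
        (Fin 2 → ConeRing k) ⊗[ConeRing k] (Fin 2 → ConeRing k))
      ∈ LinearMap.ker B₂)
    ∧ TensorProduct.map (LinearMap.ker B).mkQ (LinearMap.ker B).mkQ
        (![1, 0] ⊗ₜ ![0, 1] - ![0, 1] ⊗ₜ ![1, 0]) ≠ 0
    ∧ ∀ φ : (((Fin 2 → ConeRing k) ⧸ LinearMap.ker B)
          ⊗[ConeRing k] ((Fin 2 → ConeRing k) ⧸ LinearMap.ker B))
          →ₗ[ConeRing k]
        (((Fin 2 → ConeRing k) ⊗[ConeRing k] (Fin 2 → ConeRing k))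
          ⧸ LinearMap.ker B₂),
        (∀ x y, φ ((LinearMap.ker B).mkQ x ⊗ₜ (LinearMap.ker B).mkQ y) =
          (LinearMap.ker B₂).mkQ (x ⊗ₜ y)) →
        ¬ Function.Injective φ := by
  have hdecomp : ∀ u : Fin 2 → ConeRing k, u = u 0 • ![1, 0] + u 1 • ![0, 1] := by
    intro u; funext i; fin_cases i <;> simp
  have hBuw : ∀ u w : Fin 2 → ConeRing k, B u w =
      u 0 * w 0 * coneGen k 0 + u 0 * w 1 * coneGen k 1
      + u 1 * w 0 * coneGen k 1 + u 1 * w 1 * coneGen k 2 := by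
    intro u w
    calc B u w = B (u 0 • ![1, 0] + u 1 • ![0, 1]) (w 0 • ![1, 0] + w 1 • ![0, 1]) := by
          rw [← hdecomp u, ← hdecomp w]
      _ = _ := by
          simp only [map_add, map_smul, LinearMap.add_apply, LinearMap.smul_apply,
            hB11, hB12, hB21, hB22, smul_eq_mul]
          ring
  have hBe1 : ∀ w : Fin 2 → ConeRing k, B ![1, 0] w = w 0 * coneGen k 0 + w 1 * coneGen k 1 := by
    intro w; rw [hBuw]; simp
  have hBe2 : ∀ w : Fin 2 → ConeRing k, B ![0, 1] w = w 0 * coneGen k 1 + w 1 * coneGen k 2 := by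
    intro w; rw [hBuw]; simp
  -- Part 1
  have hmem : (![1, 0] ⊗ₜ ![0, 1] - ![0, 1] ⊗ₜ ![1, 0] :
      (Fin 2 → ConeRing k) ⊗[ConeRing k] (Fin 2 → ConeRing k)) ∈ LinearMap.ker B₂ := by
    rw [LinearMap.mem_ker]
    apply LinearMap.ext
    intro w
    rw [map_sub, LinearMap.sub_apply, LinearMap.zero_apply]
    induction w using TensorProduct.induction_on with
    | zero => simp
    | tmul u' w' =>
        rw [hB₂, hB₂, hBe1, hBe1, hBe2, hBe2]
        linear_combination (u' 0 * w' 1 - u' 1 * w' 0) * cone_rel k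
    | add x y hx hy =>
        rw [map_add, map_add]
        linear_combination hx + hy
  -- kernel of B lands in coneK componentwise
  have hkerK : ∀ u : Fin 2 → ConeRing k, u ∈ LinearMap.ker B → u 0 ∈ coneK k ∧ u 1 ∈ coneK k := by
    intro u hu
    rw [LinearMap.mem_ker] at hu
    have h1 : u 0 * coneGen k 0 + u 1 * coneGen k 1 = 0 := by
      have h := hBuw u ![1, 0]
      rw [hu, LinearMap.zero_apply] at h
      simp only [Matrix.cons_val_zero, Matrix.cons_val_one, Matrix.head_cons,
        mul_one, mul_zero, one_mul, zero_mul, add_zero, zero_add] at h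
      linear_combination -h
    exact mem_coneK k _ _ h1
  -- the bilinear detector
  let p0 : (Fin 2 → ConeRing k) →ₗ[ConeRing k] ConeRing k ⧸ coneK k := (coneK k).mkQ ∘ₗ LinearMap.proj 0
  let p1 : (Fin 2 → ConeRing k) →ₗ[ConeRing k] ConeRing k ⧸ coneK k := (coneK k).mkQ ∘ₗ LinearMap.proj 1
  let β : (Fin 2 → ConeRing k) →ₗ[ConeRing k] (Fin 2 → ConeRing k) →ₗ[ConeRing k] ConeRing k ⧸ coneK k :=
    (LinearMap.mul (ConeRing k) (ConeRing k ⧸ coneK k)).compl₁₂ p0 p1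
  have hβ : ∀ u w : Fin 2 → ConeRing k, β u w = (coneK k).mkQ (u 0) * (coneK k).mkQ (w 1) := by
    intro u w; rfl
  have hβl : ∀ u ∈ LinearMap.ker B, ∀ w, β u w = 0 := by
    intro u hu w
    rw [hβ]
    have : (coneK k).mkQ (u 0) = 0 := by
      rw [Submodule.mkQ_apply, Submodule.Quotient.mk_eq_zero]
      exact (hkerK u hu).1
    rw [this]; exact zero_mul ((coneK k).mkQ (w 1))
  have hβr : ∀ w ∈ LinearMap.ker B, ∀ u, β u w = 0 := by
    intro w hw u
    rw [hβ]
    have : (coneK k).mkQ (w 1) = 0 := by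
      rw [Submodule.mkQ_apply, Submodule.Quotient.mk_eq_zero]
      exact (hkerK w hw).2
    rw [this]; exact mul_zero ((coneK k).mkQ (u 0))
  let δ : ((Fin 2 → ConeRing k) ⧸ LinearMap.ker B) →ₗ[ConeRing k] (Fin 2 → ConeRing k) →ₗ[ConeRing k] ConeRing k ⧸ coneK k :=
    Submodule.liftQ _ β.flip (by
      intro w hw
      apply LinearMap.ext
      intro u
      exact hβr w hw u)
  let γ : ((Fin 2 → ConeRing k) ⧸ LinearMap.ker B) →ₗ[ConeRing k]
      ((Fin 2 → ConeRing k) ⧸ LinearMap.ker B) →ₗ[ConeRing k] ConeRing k ⧸ coneK k :=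
    Submodule.liftQ _ δ.flip (by
      intro u hu
      apply LinearMap.ext
      intro wq
      obtain ⟨w, rfl⟩ := Submodule.Quotient.mk_surjective _ wq
      show δ (Submodule.Quotient.mk w) u = 0
      exact hβl u hu w)
  have hγ : ∀ u w : Fin 2 → ConeRing k,
      γ ((LinearMap.ker B).mkQ u) ((LinearMap.ker B).mkQ w) = β u w := by
    intro u w
    show γ (Submodule.Quotient.mk u) (Submodule.Quotient.mk w) = β u w
    show δ (Submodule.Quotient.mk w) u = β u w
    rfl
  let L := TensorProduct.lift γ
  have hnz : TensorProduct.map (LinearMap.ker B).mkQ (LinearMap.ker B).mkQ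
      (![1, 0] ⊗ₜ ![0, 1] - ![0, 1] ⊗ₜ ![1, 0]) ≠ 0 := by
    intro h0
    have hL := congrArg L h0
    rw [map_zero] at hL
    rw [map_sub, TensorProduct.map_tmul, TensorProduct.map_tmul, map_sub] at hL
    rw [TensorProduct.lift.tmul, TensorProduct.lift.tmul] at hL
    rw [hγ, hγ, hβ, hβ] at hL
    simp only [Matrix.cons_val_zero, Matrix.cons_val_one, Matrix.head_cons, map_one,
      map_zero, one_mul, mul_zero, sub_zero, mul_one] at hL
    simp only [Submodule.mkQ_apply, Ideal.Quotient.mk_eq_mk, ← map_mul, one_mul] at hL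
    exact one_not_mem_coneK k (Ideal.Quotient.eq_zero_iff_mem.mp (by
      convert hL using 1; exact (sub_eq_self.mpr (mul_zero (0 : ConeRing k ⧸ coneK k))).symm))
  refine ⟨hmem, hnz, ?_⟩
  intro φ hφ hinj
  apply hnz
  apply hinj
  rw [map_zero, map_sub, TensorProduct.map_tmul, TensorProduct.map_tmul, map_sub,
    hφ, hφ, ← map_sub]
  rw [Submodule.mkQ_apply, Submodule.Quotient.mk_eq_zero]
  exact hmem
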